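/- arXiv:1608.07308 — 2 statements merged into one kernel-verified Lean document; each statement's English description precedes it below -/
import Mathlib

section
/- Let C be a monoidal category with unit object 𝟙, and let F be an invertible object of C. Then for every object C of C there is a bijection Hom(𝟙, F ⊗ C) ≅ Hom(𝟙, C ⊗ F). -/
open CategoryTheory MonoidalCategory

section Aux

variable {C : Type*} [Category C] [MonoidalCategory C]

/-- If `F ⊗ Finv ≅ 𝟙` and `Finv ⊗ F ≅ 𝟙`, then tensoring on the left with `Finv` is an
equivalence. -/
noncomputable def eqTensorLeft (F Finv : C) (h₁ : F ⊗ Finv ≅ 𝟙_ C) (h₂ : Finv ⊗ F ≅ 𝟙_ C) :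
    C ≌ C :=
  CategoryTheory.Equivalence.mk (tensorLeft Finv) (tensorLeft F)
    (NatIso.ofComponents
      (fun X => (λ_ X).symm ≪≫ whiskerRightIso h₁.symm X ≪≫ α_ F Finv X)
      (by
        intro X Y f
        dsimp
        simp only [whiskerRightIso_hom]
        rw [leftUnitor_inv_naturality_assoc, whisker_exchange_assoc,
          associator_naturality_right]
        simp only [Category.assoc]))
    (NatIso.ofComponents
      (fun X => (α_ Finv F X).symm ≪≫ whiskerRightIso h₂ X ≪≫ λ_ X)
      (by
        intro X Y f
        dsimp
        simp only [whiskerRightIso_hom]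
        rw [associator_inv_naturality_right_assoc, whisker_exchange_assoc]
        simp))

/-- Tensoring on the right with `F` is an equivalence. -/
noncomputable def eqTensorRight (F Finv : C) (h₁ : F ⊗ Finv ≅ 𝟙_ C) (h₂ : Finv ⊗ F ≅ 𝟙_ C) :
    C ≌ C :=
  CategoryTheory.Equivalence.mk (tensorRight F) (tensorRight Finv)
    (NatIso.ofComponents
      (fun X => (ρ_ X).symm ≪≫ whiskerLeftIso X h₁.symm ≪≫ (α_ X F Finv).symm)
      (by
        intro X Y f
        dsimp
        simp only [whiskerLeftIso_hom]
        rw [rightUnitor_inv_naturality_assoc, ← whisker_exchange_assoc,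
          associator_inv_naturality_left]
        simp only [Category.assoc]))
    (NatIso.ofComponents
      (fun X => α_ X Finv F ≪≫ whiskerLeftIso X h₂ ≪≫ ρ_ X)
      (by
        intro X Y f
        dsimp
        simp only [whiskerLeftIso_hom]
        rw [associator_naturality_left_assoc, ← whisker_exchange_assoc]
        simp))

end Aux

/-- If `F` is an invertible object of a monoidal category, then for every object
`X` there is a bijection `Hom(𝟙, F ⊗ X) ≃ Hom(𝟙, X ⊗ F)`. -/
theorem invertible_hom_unit_tensor_comm
    {C : Type*} [Category C] [MonoidalCategory C]
    (F Finv : C) (h₁ : F ⊗ Finv ≅ 𝟙_ C) (h₂ : Finv ⊗ F ≅ 𝟙_ C) :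
    ∀ X : C, Nonempty ((𝟙_ C ⟶ F ⊗ X) ≃ (𝟙_ C ⟶ X ⊗ F)) := by
  intro X
  -- Hom(𝟙, F ⊗ X) ≃ Hom(Finv ⊗ 𝟙, Finv ⊗ (F ⊗ X)) ≃ Hom(Finv, X)
  have e1 : (𝟙_ C ⟶ F ⊗ X) ≃ (Finv ⊗ 𝟙_ C ⟶ Finv ⊗ (F ⊗ X)) :=
    (eqTensorLeft F Finv h₁ h₂).fullyFaithfulFunctor.homEquiv
  have e2 : (Finv ⊗ 𝟙_ C ⟶ Finv ⊗ (F ⊗ X)) ≃ (Finv ⟶ X) :=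
    Iso.homCongr (ρ_ Finv) ((α_ Finv F X).symm ≪≫ whiskerRightIso h₂ X ≪≫ λ_ X)
  -- Hom(Finv, X) ≃ Hom(Finv ⊗ F, X ⊗ F) ≃ Hom(𝟙, X ⊗ F)
  have e3 : (Finv ⟶ X) ≃ (Finv ⊗ F ⟶ X ⊗ F) :=
    (eqTensorRight F Finv h₁ h₂).fullyFaithfulFunctor.homEquiv
  have e4 : (Finv ⊗ F ⟶ X ⊗ F) ≃ (𝟙_ C ⟶ X ⊗ F) :=
    Iso.homCongr h₂ (Iso.refl _)
  exact ⟨e1.trans (e2.trans (e3.trans e4))⟩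
end

section
/- Let D and C be monoidal categories and F : D → C a strong monoidal functor with right adjoint G. Assume that the canonical lax unit map 𝟙_D → G(𝟙_C) is an isomorphism and that the canonical projection-formula morphism p_{M,C} : M ⊗ G(C) → G(F(M) ⊗ C) is an isomorphism for all objects M of D and C of C. Then the adjunction unit η_M : M → G(F(M)) is an isomorphism for every object M of D; consequently F is fully faithful, and in particular Hom_C(𝟙_C, F(M)) ≅ Hom_D(𝟙_D, M) for every object M of D. -/
open CategoryTheory MonoidalCategory CategoryTheory.Functor.LaxMonoidal
  CategoryTheory.Functor.OplaxMonoidal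

/-- Let `F : D ⥤ C` be a strong monoidal functor with right adjoint `G`.
If the canonical lax unit map `𝟙_D ⟶ G (𝟙_C)` is an isomorphism, and for all `M : D`, `X : C`
the canonical projection-formula morphism `M ⊗ G X ⟶ G (F M ⊗ X)` is an isomorphism, then the
adjunction unit `η_M : M ⟶ G (F M)` is an isomorphism for every `M`; consequently `F` is fully
faithful, and in particular `Hom(𝟙_C, F M) ≃ Hom(𝟙_D, M)` for every `M`. -/
theorem monoidal_projection_formula_unit_isIso
    {D C : Type*} [Category D] [Category C] [MonoidalCategory D] [MonoidalCategory C]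
    (F : D ⥤ C) [F.Monoidal] (G : C ⥤ D) (adj : F ⊣ G)
    (hunit : IsIso (adj.unit.app (𝟙_ D) ≫ G.map (η F)))
    (hproj : ∀ (M : D) (X : C),
      IsIso (adj.unit.app (M ⊗ G.obj X) ≫ G.map (δ F M (G.obj X)) ≫
        G.map (F.obj M ◁ adj.counit.app X))) :
    (∀ M : D, IsIso (adj.unit.app M)) ∧ F.Full ∧ F.Faithful ∧
      (∀ M : D, Nonempty ((𝟙_ C ⟶ F.obj M) ≃ (𝟙_ D ⟶ M))) := by
  have key : ∀ M : D, adj.unit.app M =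
      (ρ_ M).inv ≫ (M ◁ (adj.unit.app (𝟙_ D) ≫ G.map (η F))) ≫
      (adj.unit.app (M ⊗ G.obj (𝟙_ C)) ≫ G.map (δ F M (G.obj (𝟙_ C))) ≫
        G.map (F.obj M ◁ adj.counit.app (𝟙_ C))) ≫ G.map ((ρ_ (F.obj M)).hom) := by
    intro M
    have n1 : (M ◁ (adj.unit.app (𝟙_ D) ≫ G.map (η F))) ≫ adj.unit.app (M ⊗ G.obj (𝟙_ C)) =
        adj.unit.app (M ⊗ 𝟙_ D) ≫ G.map (F.map (M ◁ (adj.unit.app (𝟙_ D) ≫ G.map (η F)))) := by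
      simpa using adj.unit.naturality (M ◁ (adj.unit.app (𝟙_ D) ≫ G.map (η F)))
    have n2 : (ρ_ M).inv ≫ adj.unit.app (M ⊗ 𝟙_ D) =
        adj.unit.app M ≫ G.map (F.map (ρ_ M).inv) := by
      simpa using adj.unit.naturality (ρ_ M).inv
    simp only [Category.assoc]
    slice_rhs 2 3 => rw [n1]
    slice_rhs 1 2 => rw [n2]
    simp only [Category.assoc, ← G.map_comp]
    have inner : F.map (ρ_ M).inv ≫ F.map (M ◁ (adj.unit.app (𝟙_ D) ≫ G.map (η F))) ≫
        δ F M (G.obj (𝟙_ C)) ≫ (F.obj M ◁ adj.counit.app (𝟙_ C)) ≫ (ρ_ (F.obj M)).hom = 𝟙 _ := by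
      rw [← δ_natural_right_assoc]
      simp only [Functor.map_comp, MonoidalCategory.whiskerLeft_comp, Category.assoc]
      rw [← MonoidalCategory.whiskerLeft_comp_assoc (f := F.map (G.map (η F))),
        adj.counit_naturality (η F), MonoidalCategory.whiskerLeft_comp_assoc,
        ← MonoidalCategory.whiskerLeft_comp_assoc (f := F.map (adj.unit.app (𝟙_ D))),
        adj.left_triangle_components (𝟙_ D)]
      simp [right_unitality_hom]
    rw [inner]
    simp
  have hu : ∀ M : D, IsIso (adj.unit.app M) := by
    intro M
    rw [key M]
    haveI := hproj M (𝟙_ C)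
    infer_instance
  haveI : IsIso adj.unit := NatIso.isIso_of_isIso_app _
  have ff := adj.fullyFaithfulLOfIsIsoUnit
  refine ⟨hu, ff.full, ff.faithful, fun M => ⟨?_⟩⟩
  exact ((Iso.homCongr (asIso (η F)).symm (Iso.refl (F.obj M)))).trans ff.homEquiv.symm
end
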